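/- arXiv:1609.01582 — 7 statements merged into one kernel-verified Lean document; each statement's English description precedes it below -/
import Mathlib

section
/- Let g and h be non-negative submodular functions on subsets of a finite set S, with g non-decreasing with respect to set inclusion and h non-increasing with respect to set inclusion. Then the pointwise product g·h is submodular. -/
lemma aux_prod_submod (a b c d p q r s : ℝ)
    (h0a : 0 ≤ a) (h0r : 0 ≤ r)
    (hab : a ≤ b) (hcd : c ≤ d) (had : a ≤ d)
    (hqp : q ≤ p) (hsr : s ≤ r) (hrq : r ≤ q)
    (hgsub : a + d ≤ b + c) (hhsub : p + s ≤ q + r) :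
    a * p + d * s ≤ b * q + c * r := by
  nlinarith [mul_nonneg h0r (sub_nonneg.2 hab), mul_nonneg h0a (sub_nonneg.2 hrq),
    mul_nonneg (sub_nonneg.2 hrq) (sub_nonneg.2 hab),
    mul_nonneg (sub_nonneg.2 had) (sub_nonneg.2 hsr)]

/-- The product of a non-negative non-decreasing submodular function and a non-negative
non-increasing submodular function is submodular. -/
theorem stmt_8 {α : Type*} [Fintype α] [DecidableEq α] (g h : Finset α → ℝ)
    (hg0 : ∀ Z, 0 ≤ g Z) (hh0 : ∀ Z, 0 ≤ h Z)
    (hgsub : ∀ X Y : Finset α, g (X ∩ Y) + g (X ∪ Y) ≤ g X + g Y)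
    (hhsub : ∀ X Y : Finset α, h (X ∩ Y) + h (X ∪ Y) ≤ h X + h Y)
    (hgmono : ∀ X Y : Finset α, X ⊆ Y → g X ≤ g Y)
    (hhanti : ∀ X Y : Finset α, X ⊆ Y → h Y ≤ h X) :
    ∀ X Y : Finset α,
      g (X ∩ Y) * h (X ∩ Y) + g (X ∪ Y) * h (X ∪ Y) ≤ g X * h X + g Y * h Y := by
  intro X Y
  rcases le_total (h Y) (h X) with hc | hc
  · have := aux_prod_submod (g (X ∩ Y)) (g X) (g Y) (g (X ∪ Y))
      (h (X ∩ Y)) (h X) (h Y) (h (X ∪ Y))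
      (hg0 _) (hh0 _)
      (hgmono _ _ Finset.inter_subset_left)
      (hgmono _ _ Finset.subset_union_right)
      (hgmono _ _ (Finset.inter_subset_left.trans Finset.subset_union_left))
      (hhanti _ _ Finset.inter_subset_left)
      (hhanti _ _ Finset.subset_union_right)
      hc (hgsub X Y) (hhsub X Y)
    linarith
  · have := aux_prod_submod (g (X ∩ Y)) (g Y) (g X) (g (X ∪ Y))
      (h (X ∩ Y)) (h Y) (h X) (h (X ∪ Y))
      (hg0 _) (hh0 _)
      (hgmono _ _ Finset.inter_subset_right)
      (hgmono _ _ Finset.subset_union_left)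
      (hgmono _ _ (Finset.inter_subset_left.trans Finset.subset_union_left))
      (hhanti _ _ Finset.inter_subset_right)
      (hhanti _ _ Finset.subset_union_left)
      hc (by linarith [hgsub X Y]) (by linarith [hhsub X Y])
    linarith
end

section
/- Fix a positive integer n and finite sets X, Y ⊆ {1,...,T} with T ≤ n. Define b = |Xᶜ ∩ Y|, c = |X ∩ Yᶜ|, d = |X ∩ Y| (complements taken inside {1,...,T}), and f(X,Y) = (1 - b/n)(1 - c/n)·exp(-d/n). Then for each fixed X, the function Y ↦ f(X,Y) is submodular, and symmetrically for each fixed Y the function X ↦ f(X,Y) is submodular. -/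
noncomputable def hfun (N K x : ℝ) : ℝ := (1 - (K - x) / N) * Real.exp (-x / N)

lemma hfun_hasDerivAt (N K : ℝ) (hN : N ≠ 0) (x : ℝ) :
    HasDerivAt (hfun N K) ((K - x) / N ^ 2 * Real.exp (-x / N)) x := by
  have h1 : HasDerivAt (fun x : ℝ => 1 - (K - x) / N) (1 / N) x := by
    have := (((hasDerivAt_id x).const_sub K).div_const N).const_sub 1
    exact this.congr_deriv (by ring)
  have h2 : HasDerivAt (fun x : ℝ => Real.exp (-x / N)) (Real.exp (-x / N) * (-1 / N)) x := by
    have := (((hasDerivAt_id x).neg).div_const N).exp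
    exact this
  have := h1.mul h2
  refine this.congr_deriv ?_
  field_simp
  ring

lemma hp_hasDerivAt (N K : ℝ) (hN : N ≠ 0) (x : ℝ) :
    HasDerivAt (fun x => (K - x) / N ^ 2 * Real.exp (-x / N))
      (-(1 + (K - x) / N) / N ^ 2 * Real.exp (-x / N)) x := by
  have h1 : HasDerivAt (fun x : ℝ => (K - x) / N ^ 2) (-1 / N ^ 2) x := by
    have := ((hasDerivAt_id x).const_sub K).div_const (N ^ 2)
    exact this.congr_deriv (by ring)
  have h2 : HasDerivAt (fun x : ℝ => Real.exp (-x / N)) (Real.exp (-x / N) * (-1 / N)) x := by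
    have := (((hasDerivAt_id x).neg).div_const N).exp
    exact this
  have := h1.mul h2
  refine this.congr_deriv ?_
  field_simp
  ring
lemma hfun_mono (N K : ℝ) (hN : 0 < N) (hKN : K ≤ N) :
    MonotoneOn (hfun N K) (Set.Icc 0 K) := by
  apply monotoneOn_of_deriv_nonneg (convex_Icc 0 K)
  · exact fun x _ => ((hfun_hasDerivAt N K hN.ne' x).continuousAt).continuousWithinAt
  · intro x _
    exact ((hfun_hasDerivAt N K hN.ne' x).differentiableAt).differentiableWithinAt
  · intro x hx
    rw [interior_Icc] at hx
    rw [(hfun_hasDerivAt N K hN.ne' x).deriv]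
    have : 0 ≤ (K - x) / N ^ 2 := by
      apply div_nonneg (by linarith [hx.2]) (by positivity)
    exact mul_nonneg this (Real.exp_nonneg _)

lemma hp_anti (N K : ℝ) (hN : 0 < N) (hKN : K ≤ N) :
    AntitoneOn (fun x => (K - x) / N ^ 2 * Real.exp (-x / N)) (Set.Icc 0 K) := by
  apply antitoneOn_of_deriv_nonpos (convex_Icc 0 K)
  · exact fun x _ => ((hp_hasDerivAt N K hN.ne' x).continuousAt).continuousWithinAt
  · intro x _
    exact ((hp_hasDerivAt N K hN.ne' x).differentiableAt).differentiableWithinAt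
  · intro x hx
    rw [interior_Icc] at hx
    rw [(hp_hasDerivAt N K hN.ne' x).deriv]
    have h1 : 0 ≤ 1 + (K - x) / N := by
      have : -1 ≤ (K - x) / N := by
        rw [le_div_iff₀ hN]
        linarith [hx.2]
      linarith
    have : -(1 + (K - x) / N) / N ^ 2 ≤ 0 := by
      apply div_nonpos_of_nonpos_of_nonneg (by linarith) (by positivity)
    exact mul_nonpos_of_nonpos_of_nonneg this (Real.exp_nonneg _)

lemma hfun_incr (N K a b t : ℝ) (hN : 0 < N) (hKN : K ≤ N) (ha : 0 ≤ a) (hab : a ≤ b)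
    (ht : 0 ≤ t) (hbt : b + t ≤ K) :
    hfun N K (b + t) - hfun N K b ≤ hfun N K (a + t) - hfun N K a := by
  have hψ : ∀ s : ℝ, HasDerivAt (fun s => hfun N K (s + t) - hfun N K s)
      ((K - (s + t)) / N ^ 2 * Real.exp (-(s + t) / N) - (K - s) / N ^ 2 * Real.exp (-s / N)) s := by
    intro s
    have h1 : HasDerivAt (fun s : ℝ => hfun N K (s + t))
        ((K - (s + t)) / N ^ 2 * Real.exp (-(s + t) / N)) s := by
      have := (hfun_hasDerivAt N K hN.ne' (s + t)).comp s ((hasDerivAt_id s).add_const t)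
      exact this.congr_deriv (mul_one _)
    exact h1.sub (hfun_hasDerivAt N K hN.ne' s)
  have hanti : AntitoneOn (fun s => hfun N K (s + t) - hfun N K s) (Set.Icc 0 (K - t)) := by
    apply antitoneOn_of_deriv_nonpos (convex_Icc 0 (K - t))
    · exact fun x _ => ((hψ x).continuousAt).continuousWithinAt
    · exact fun x _ => ((hψ x).differentiableAt).differentiableWithinAt
    · intro x hx
      rw [interior_Icc] at hx
      rw [(hψ x).deriv]
      have := hp_anti N K hN hKN (show x ∈ Set.Icc 0 K by
          constructor <;> [linarith [hx.1]; linarith [hx.2]])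
        (show x + t ∈ Set.Icc 0 K by constructor <;> [linarith [hx.1]; linarith [hx.2]])
        (by linarith)
      simpa using this
  have := hanti (show a ∈ Set.Icc 0 (K - t) by constructor <;> linarith)
    (show b ∈ Set.Icc 0 (K - t) by constructor <;> linarith) hab
  simpa using this
lemma fourpoint (N K b β₁ β₂ d δ₁ δ₂ : ℝ) (hN : 0 < N) (hKN : K ≤ N)
    (hb : 0 ≤ b) (hβ₁ : 0 ≤ β₁) (hβ₂ : 0 ≤ β₂) (hd : 0 ≤ d) (hδ₁ : 0 ≤ δ₁) (hδ₂ : 0 ≤ δ₂)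
    (hbtot : b + β₁ + β₂ ≤ N) (hdtot : d + δ₁ + δ₂ ≤ K) :
    (1 - b / N) * hfun N K d + (1 - (b + β₁ + β₂) / N) * hfun N K (d + δ₁ + δ₂) ≤
      (1 - (b + β₁) / N) * hfun N K (d + δ₁) + (1 - (b + β₂) / N) * hfun N K (d + δ₂) := by
  set h0 := hfun N K d with hh0
  set h1 := hfun N K (d + δ₁) with hh1
  set h2 := hfun N K (d + δ₂) with hh2
  set h3 := hfun N K (d + δ₁ + δ₂) with hh3
  have mono := hfun_mono N K hN hKN
  have m00 : (0:ℝ) ≤ d := hd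
  have hin : ∀ x : ℝ, 0 ≤ x → x ≤ d + δ₁ + δ₂ → x ∈ Set.Icc 0 K :=
    fun x h1 h2 => ⟨h1, by linarith⟩
  have h01 : h0 ≤ h1 := mono (hin d hd (by linarith)) (hin (d + δ₁) (by linarith) (by linarith)) (by linarith)
  have h23 : h2 ≤ h3 := by
    have := mono (hin (d + δ₂) (by linarith) (by linarith))
      (hin (d + δ₁ + δ₂) (by linarith) le_rfl) (by linarith)
    simpa [hh2, hh3] using this
  have h13 : h1 ≤ h3 := mono (hin (d + δ₁) (by linarith) (by linarith))
    (hin (d + δ₁ + δ₂) (by linarith) le_rfl) (by linarith)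
  -- concavity increment: h3 - h2 ≤ h1 - h0
  have hincr : h3 - h2 ≤ h1 - h0 := by
    have := hfun_incr N K d (d + δ₂) δ₁ hN hKN hd (by linarith) hδ₁ (by linarith)
    have e1 : d + δ₂ + δ₁ = d + δ₁ + δ₂ := by ring
    rw [e1] at this
    simpa [hh0, hh1, hh2, hh3] using this
  -- A1 : 0 ≤ (β₁/N) * (h3 - h1)
  have A1 : 0 ≤ β₁ / N * (h3 - h1) :=
    mul_nonneg (div_nonneg hβ₁ hN.le) (by linarith)
  -- A2 : (1-(b+β₂)/N)*(h3-h2) ≤ (1-b/N)*(h1-h0)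
  have hc1 : (0:ℝ) ≤ 1 - (b + β₂) / N := by
    rw [sub_nonneg, div_le_one hN]; linarith
  have hc2 : 1 - (b + β₂) / N ≤ 1 - b / N := by
    have : b / N ≤ (b + β₂) / N := by gcongr; linarith
    linarith
  have A2 : (1 - (b + β₂) / N) * (h3 - h2) ≤ (1 - b / N) * (h1 - h0) :=
    mul_le_mul hc2 hincr (by linarith) (by linarith [hc1, hc2])
  have expand : ((1 - (b + β₁) / N) * h1 + (1 - (b + β₂) / N) * h2) -
      ((1 - b / N) * h0 + (1 - (b + β₁ + β₂) / N) * h3) =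
      β₁ / N * (h3 - h1) + ((1 - b / N) * (h1 - h0) - (1 - (b + β₂) / N) * (h3 - h2)) := by
    ring
  linarith [A1, A2, expand]
open Finset in
lemma card_split {T : ℕ} (S A B : Finset (Fin T)) :
    (S ∩ A).card = (S ∩ (A ∩ B)).card + (S ∩ (A \ B)).card := by
  have e1 : S ∩ (A ∩ B) = (S ∩ A) ∩ B := by rw [inter_assoc]
  have e2 : S ∩ (A \ B) = (S ∩ A) \ B := by ext x; simp only [mem_inter, mem_sdiff]; tauto
  rw [e1, e2, card_inter_add_card_sdiff]

open Finset in
lemma card_split_union {T : ℕ} (S A B : Finset (Fin T)) :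
    (S ∩ (A ∪ B)).card = (S ∩ (A ∩ B)).card + (S ∩ (A \ B)).card + (S ∩ (B \ A)).card := by
  have e0 : (S ∩ (A ∪ B)).card = (S ∩ ((A ∪ B) ∩ B)).card + (S ∩ ((A ∪ B) \ B)).card :=
    card_split S (A ∪ B) B
  have e1 : (A ∪ B) ∩ B = B := inter_eq_right.2 subset_union_right
  have e2 : (A ∪ B) \ B = A \ B := union_sdiff_right A B
  have e3 : (S ∩ B).card = (S ∩ (A ∩ B)).card + (S ∩ (B \ A)).card := by
    rw [card_split S B A, inter_comm B A]
  rw [e0, e1, e2, e3]; ring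

open Finset in
lemma key (n T : ℕ) (hn : 0 < n) (hT : T ≤ n) (Z A B : Finset (Fin T)) :
    (1 - ((Zᶜ ∩ (A ∩ B)).card : ℝ) / n) * hfun n Z.card ((Z ∩ (A ∩ B)).card) +
      (1 - ((Zᶜ ∩ (A ∪ B)).card : ℝ) / n) * hfun n Z.card ((Z ∩ (A ∪ B)).card) ≤
    (1 - ((Zᶜ ∩ A).card : ℝ) / n) * hfun n Z.card ((Z ∩ A).card) +
      (1 - ((Zᶜ ∩ B).card : ℝ) / n) * hfun n Z.card ((Z ∩ B).card) := by
  have eA := card_split Zᶜ A B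
  have eB : (Zᶜ ∩ B).card = (Zᶜ ∩ (A ∩ B)).card + (Zᶜ ∩ (B \ A)).card := by
    rw [card_split Zᶜ B A, inter_comm B A]
  have eU := card_split_union Zᶜ A B
  have dA := card_split Z A B
  have dB : (Z ∩ B).card = (Z ∩ (A ∩ B)).card + (Z ∩ (B \ A)).card := by
    rw [card_split Z B A, inter_comm B A]
  have dU := card_split_union Z A B
  have hub : (Zᶜ ∩ (A ∪ B)).card ≤ n := by
    calc (Zᶜ ∩ (A ∪ B)).card ≤ (univ : Finset (Fin T)).card := card_le_univ _
    _ = T := by simp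
    _ ≤ n := hT
  have hud : (Z ∩ (A ∪ B)).card ≤ Z.card := card_le_card inter_subset_left
  have hZn : Z.card ≤ n := by
    calc Z.card ≤ (univ : Finset (Fin T)).card := card_le_univ _
    _ = T := by simp
    _ ≤ n := hT
  have H := fourpoint (n : ℝ) (Z.card : ℝ) ((Zᶜ ∩ (A ∩ B)).card : ℝ)
    ((Zᶜ ∩ (A \ B)).card : ℝ) ((Zᶜ ∩ (B \ A)).card : ℝ)
    ((Z ∩ (A ∩ B)).card : ℝ) ((Z ∩ (A \ B)).card : ℝ) ((Z ∩ (B \ A)).card : ℝ)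
    (by exact_mod_cast hn) (by exact_mod_cast hZn)
    (Nat.cast_nonneg _) (Nat.cast_nonneg _) (Nat.cast_nonneg _)
    (Nat.cast_nonneg _) (Nat.cast_nonneg _) (Nat.cast_nonneg _)
    (by rw [eU] at hub; exact_mod_cast hub)
    (by rw [dU] at hud; exact_mod_cast hud)
  rw [eA, eB, eU, dA, dB, dU]
  push_cast
  push_cast at H
  linarith [H]

open Finset in
lemma card_inter_compl {T : ℕ} (X Y : Finset (Fin T)) :
    ((X ∩ Yᶜ).card : ℝ) = X.card - (X ∩ Y).card := by
  have h := card_inter_add_card_sdiff X Y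
  have h2 : X ∩ Yᶜ = X \ Y := (sdiff_eq).symm
  rw [h2]
  have : ((X ∩ Y).card : ℝ) + ((X \ Y).card : ℝ) = X.card := by exact_mod_cast h
  linarith





/-- With `b = |Xᶜ ∩ Y|`, `c = |X ∩ Yᶜ|`, `d = |X ∩ Y|` (inside `{1,...,T}`, `T ≤ n`) and
`f(X,Y) = (1 - b/n)(1 - c/n)exp(-d/n)`, the function `f` is submodular in each argument. -/
theorem stmt_9 (n T : ℕ) (hn : 0 < n) (hT : T ≤ n)
    (f : Finset (Fin T) → Finset (Fin T) → ℝ)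
    (hf : ∀ X Y : Finset (Fin T),
      f X Y = (1 - ((Xᶜ ∩ Y).card : ℝ) / n) * (1 - ((X ∩ Yᶜ).card : ℝ) / n) *
        Real.exp (-(((X ∩ Y).card : ℝ) / n))) :
    (∀ X : Finset (Fin T), ∀ A B : Finset (Fin T),
      f X (A ∩ B) + f X (A ∪ B) ≤ f X A + f X B) ∧
    (∀ Y : Finset (Fin T), ∀ A B : Finset (Fin T),
      f (A ∩ B) Y + f (A ∪ B) Y ≤ f A Y + f B Y) := by
  have hform1 : ∀ X Y : Finset (Fin T),
      f X Y = (1 - ((Xᶜ ∩ Y).card : ℝ) / n) * hfun n X.card ((X ∩ Y).card) := by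
    intro X Y
    rw [hf X Y, card_inter_compl X Y]
    simp only [hfun, neg_div]
    ring
  have hform2 : ∀ X Y : Finset (Fin T),
      f X Y = (1 - ((Yᶜ ∩ X).card : ℝ) / n) * hfun n Y.card ((Y ∩ X).card) := by
    intro X Y
    rw [hf X Y, show Xᶜ ∩ Y = Y ∩ Xᶜ from Finset.inter_comm _ _,
      show X ∩ Yᶜ = Yᶜ ∩ X from Finset.inter_comm _ _,
      show X ∩ Y = Y ∩ X from Finset.inter_comm _ _, card_inter_compl Y X]
    simp only [hfun, neg_div]
    ring
  constructor
  · intro X A B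
    simp only [hform1]
    exact key n T hn hT X A B
  · intro Y A B
    simp only [hform2]
    exact key n T hn hT Y A B
end

section
/- The function g(t₁, t₂) = (1 - |t₁ - t₂|/n)·exp((max(t₁,t₂) - T)/n), defined for t₁, t₂ ∈ [0, T] with T ≤ n, is concave in each variable separately (holding the other fixed). -/
open Real

private lemma key_ineq {x : ℝ} (hx : 0 ≤ x) : (1 - x) * Real.exp x ≤ 1 + x := by
  have h1 : 1 - x ≤ Real.exp (-x) := by
    have := Real.add_one_le_exp (-x); linarith
  have h2 : (1 - x) * Real.exp x ≤ Real.exp (-x) * Real.exp x :=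
    mul_le_mul_of_nonneg_right h1 (Real.exp_pos x).le
  rw [← Real.exp_add] at h2
  simp at h2
  linarith

private lemma derivB (n T t₁ : ℝ) (hn : 0 < n) (t : ℝ) :
    HasDerivAt (fun t => (1 - (t - t₁) / n) * Real.exp ((t - T) / n))
      (-(t - t₁) / n ^ 2 * Real.exp ((t - T) / n)) t := by
  have h2 : HasDerivAt (fun t : ℝ => 1 - (t - t₁) / n) (-(1 / n)) t := by
    simpa using (((hasDerivAt_id t).sub_const t₁).div_const n).const_sub 1
  have h3 : HasDerivAt (fun t : ℝ => (t - T) / n) (1 / n) t := by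
    simpa using ((hasDerivAt_id t).sub_const T).div_const n
  have h4 := h3.exp
  have h5 := h2.mul h4
  refine h5.congr_deriv ?_
  field_simp
  ring

private lemma derivB2 (n T t₁ : ℝ) (hn : 0 < n) (t : ℝ) :
    HasDerivAt (fun t => -(t - t₁) / n ^ 2 * Real.exp ((t - T) / n))
      ((-(1 / n ^ 2) + -(t - t₁) / n ^ 3) * Real.exp ((t - T) / n)) t := by
  have h2 : HasDerivAt (fun t : ℝ => -(t - t₁) / n ^ 2) (-(1 / n ^ 2)) t := by
    have := (((hasDerivAt_id t).sub_const t₁).neg).div_const (n ^ 2)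
    refine this.congr_deriv ?_; simp [neg_div]
  have h3 : HasDerivAt (fun t : ℝ => (t - T) / n) (1 / n) t := by
    simpa using ((hasDerivAt_id t).sub_const T).div_const n
  have h5 := h2.mul h3.exp
  refine h5.congr_deriv ?_
  field_simp

private lemma concB (n T t₁ : ℝ) (hn : 0 < n) (hTn : T ≤ n) (ht₁ : t₁ ≤ T) :
    ConcaveOn ℝ (Set.Icc (0 : ℝ) T)
      (fun t => (1 - (t - t₁) / n) * Real.exp ((t - T) / n)) := by
  have hd : deriv (fun t => (1 - (t - t₁) / n) * Real.exp ((t - T) / n)) =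
      fun t => -(t - t₁) / n ^ 2 * Real.exp ((t - T) / n) :=
    funext fun t => (derivB n T t₁ hn t).deriv
  apply concaveOn_of_deriv2_nonpos' (convex_Icc _ _)
  · exact fun t _ => (derivB n T t₁ hn t).differentiableAt.differentiableWithinAt
  · rw [hd]
    exact fun t _ => (derivB2 n T t₁ hn t).differentiableAt.differentiableWithinAt
  · intro x hx
    show deriv (deriv _) x ≤ 0
    rw [hd, (derivB2 n T t₁ hn x).deriv]
    have he := (Real.exp_pos ((x - T) / n)).le
    have h1 : -(1 / n ^ 2) + -(x - t₁) / n ^ 3 ≤ 0 := by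
      rw [Set.mem_Icc] at hx
      have hnum : 0 ≤ (n + (x - t₁)) / n ^ 3 := div_nonneg (by linarith [hx.1]) (by positivity)
      have heq : -(1 / n ^ 2) + -(x - t₁) / n ^ 3 = -((n + (x - t₁)) / n ^ 3) := by
        field_simp; ring
      rw [heq]; linarith
    nlinarith

private lemma concA (n T t₁ : ℝ) :
    ConcaveOn ℝ (Set.Icc (0 : ℝ) T)
      (fun t => (1 - (t₁ - t) / n) * Real.exp ((t₁ - T) / n)) := by
  refine ⟨convex_Icc _ _, fun x _ y _ a b ha hb hab => ?_⟩
  simp only [smul_eq_mul]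
  apply le_of_eq
  have hb' : b = 1 - a := by linarith
  subst hb'
  ring

private lemma min_eq (n T t₁ : ℝ) (hn : 0 < n) (t : ℝ) :
    min ((1 - (t₁ - t) / n) * Real.exp ((t₁ - T) / n))
        ((1 - (t - t₁) / n) * Real.exp ((t - T) / n)) =
      (1 - |t₁ - t| / n) * Real.exp ((max t₁ t - T) / n) := by
  rcases le_total t t₁ with h | h
  · have hx : 0 ≤ (t₁ - t) / n := div_nonneg (by linarith) hn.le
    have hk := key_ineq hx
    have hsplit : Real.exp ((t₁ - T) / n) =
        Real.exp ((t₁ - t) / n) * Real.exp ((t - T) / n) := by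
      rw [← Real.exp_add]; congr 1; field_simp; ring
    have hle : (1 - (t₁ - t) / n) * Real.exp ((t₁ - T) / n) ≤
        (1 - (t - t₁) / n) * Real.exp ((t - T) / n) := by
      rw [hsplit]
      have h1 := mul_le_mul_of_nonneg_right hk (Real.exp_pos ((t - T) / n)).le
      have h2 : (1 - (t - t₁) / n) = 1 + (t₁ - t) / n := by ring
      rw [h2, ← mul_assoc]
      exact h1
    rw [min_eq_left hle, abs_of_nonneg (by linarith : (0:ℝ) ≤ t₁ - t),
      max_eq_left h]
  · have hx : 0 ≤ (t - t₁) / n := div_nonneg (by linarith) hn.le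
    have hk := key_ineq hx
    have hsplit : Real.exp ((t - T) / n) =
        Real.exp ((t - t₁) / n) * Real.exp ((t₁ - T) / n) := by
      rw [← Real.exp_add]; congr 1; field_simp; ring
    have hle : (1 - (t - t₁) / n) * Real.exp ((t - T) / n) ≤
        (1 - (t₁ - t) / n) * Real.exp ((t₁ - T) / n) := by
      rw [hsplit]
      have h1 := mul_le_mul_of_nonneg_right hk (Real.exp_pos ((t₁ - T) / n)).le
      have h2 : (1 - (t₁ - t) / n) = 1 + (t - t₁) / n := by ring
      rw [h2, ← mul_assoc]
      exact h1
    rw [min_eq_right hle, abs_of_nonpos (by linarith : t₁ - t ≤ 0),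
      max_eq_right h]
    ring_nf

private lemma aux_conc (n T : ℝ) (hn : 0 < n) (hTn : T ≤ n) (t₁ : ℝ)
    (ht₁ : t₁ ∈ Set.Icc (0 : ℝ) T) :
    ConcaveOn ℝ (Set.Icc (0 : ℝ) T)
      (fun t => (1 - |t₁ - t| / n) * Real.exp ((max t₁ t - T) / n)) := by
  have h := (concA n T t₁).inf (concB n T t₁ hn hTn ht₁.2)
  have he : (fun t => (1 - (t₁ - t) / n) * Real.exp ((t₁ - T) / n)) ⊓
      (fun t => (1 - (t - t₁) / n) * Real.exp ((t - T) / n)) =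
      fun t => (1 - |t₁ - t| / n) * Real.exp ((max t₁ t - T) / n) := by
    funext t
    exact min_eq n T t₁ hn t
  rwa [he] at h

/-- The function `g(t₁,t₂) = (1 - |t₁ - t₂|/n)·exp((max(t₁,t₂) - T)/n)` on `[0,T]²`,
with `T ≤ n`, is concave in each variable separately. -/
theorem stmt_11 (n T : ℝ) (hn : 0 < n) (hT : 0 < T) (hTn : T ≤ n)
    (g : ℝ → ℝ → ℝ)
    (hg : ∀ t₁ t₂, g t₁ t₂ = (1 - |t₁ - t₂| / n) * Real.exp ((max t₁ t₂ - T) / n)) :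
    (∀ t₁ ∈ Set.Icc (0 : ℝ) T, ConcaveOn ℝ (Set.Icc (0 : ℝ) T) (fun t₂ => g t₁ t₂)) ∧
    (∀ t₂ ∈ Set.Icc (0 : ℝ) T, ConcaveOn ℝ (Set.Icc (0 : ℝ) T) (fun t₁ => g t₁ t₂)) := by
  constructor
  · intro t₁ ht₁
    have h : (fun t₂ => g t₁ t₂) =
        fun t => (1 - |t₁ - t| / n) * Real.exp ((max t₁ t - T) / n) :=
      funext fun t => hg t₁ t
    rw [h]
    exact aux_conc n T hn hTn t₁ ht₁
  · intro t₂ ht₂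
    have h : (fun t₁ => g t₁ t₂) =
        fun t => (1 - |t₂ - t| / n) * Real.exp ((max t₂ t - T) / n) := by
      funext t
      rw [hg, abs_sub_comm, max_comm]
    rw [h]
    exact aux_conc n T hn hTn t₂ ht₂
end

section
/- Let φ be a distribution on subsets of a finite set S that is supported on a chain (a family of sets totally ordered by inclusion) and has coordinatewise expectation x ∈ [0,1]^S, i.e., Pr_{Z∼φ}[s ∈ Z] = x(s) for each s. Then φ equals the Lovász extension distribution of x: sampling λ uniform in [0,1] and outputting {s : x(s) ≥ λ}. -/
open MeasureTheory

lemma meas_eq_sum_singletons {β : Type*} [Fintype β] [MeasurableSpace β]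
    [MeasurableSingletonClass β] (μ : Measure β) (U : Set β) :
    μ U = ∑ b ∈ (Set.toFinite U).toFinset, μ {b} := by
  classical
  have hdisj : (((Set.toFinite U).toFinset : Finset β) : Set β).PairwiseDisjoint
      (fun b => ({b} : Set β)) := by
    intro a _ b _ hab
    simp [Function.onFun, hab]
  have hU : U = ⋃ b ∈ (Set.toFinite U).toFinset, ({b} : Set β) := by
    ext b
    simp only [Set.mem_iUnion, Set.Finite.mem_toFinset, Set.mem_singleton_iff]
    constructor
    · intro hb; exact ⟨b, hb, rfl⟩
    · rintro ⟨c, hc, rfl⟩; exact hc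
  conv_lhs => rw [hU]
  exact measure_biUnion_finset hdisj fun b _ => measurableSet_singleton b

/-- A distribution on subsets of a finite set that is supported on a chain and has
coordinatewise marginals `x ∈ [0,1]^S` must equal the Lovász-extension distribution of
`x`: sample `λ` uniformly in `[0,1]` and output the superlevel set `{s : x(s) ≥ λ}`. -/
theorem stmt_13 {α : Type*} [Fintype α] [DecidableEq α] [MeasurableSpace (Finset α)]
    [MeasurableSingletonClass (Finset α)]
    (φ : Measure (Finset α)) [IsProbabilityMeasure φ]
    (x : α → ℝ) (hx : ∀ s, x s ∈ Set.Icc (0 : ℝ) 1)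
    (hchain : ∀ A B : Finset α, φ {A} ≠ 0 → φ {B} ≠ 0 → A ⊆ B ∨ B ⊆ A)
    (hmarg : ∀ s : α, φ {Z | s ∈ Z} = ENNReal.ofReal (x s)) :
    φ = Measure.map (fun lam : ℝ => Finset.univ.filter (fun s => lam ≤ x s))
          (volume.restrict (Set.Icc (0 : ℝ) 1)) := by
  classical
  set f : ℝ → Finset α := fun lam => Finset.univ.filter (fun s => lam ≤ x s) with hf
  have hmemf : ∀ (lam : ℝ) (s : α), s ∈ f lam ↔ lam ≤ x s := by
    intro lam s; simp [hf]
  have hfm : Measurable f := by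
    apply measurable_to_countable'
    intro A
    have hpre : f ⁻¹' {A} =
        ⋂ s : α, (if s ∈ A then Set.Iic (x s) else (Set.Iic (x s))ᶜ) := by
      ext lam
      simp only [Set.mem_preimage, Set.mem_singleton_iff, Finset.ext_iff, hmemf,
        Set.mem_iInter]
      refine forall_congr' fun s => ?_
      by_cases hs : s ∈ A <;> simp [hs]
    rw [hpre]
    exact MeasurableSet.iInter fun s => by
      split_ifs
      · exact measurableSet_Iic
      · exact measurableSet_Iic.compl
  set ψ := Measure.map f (volume.restrict (Set.Icc (0 : ℝ) 1)) with hψ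
  have hψ_apply : ∀ U : Set (Finset α), ψ U = volume (f ⁻¹' U ∩ Set.Icc 0 1) := by
    intro U
    rw [hψ, Measure.map_apply hfm (Set.toFinite U).measurableSet,
      Measure.restrict_apply (hfm (Set.toFinite U).measurableSet)]
  have hψuniv : ψ Set.univ = 1 := by
    rw [hψ_apply]
    simp [Real.volume_Icc]
  have hψfin : ∀ U : Set (Finset α), ψ U ≠ ⊤ := by
    intro U
    refine ne_top_of_le_ne_top ?_ (measure_mono (Set.subset_univ U))
    rw [hψuniv]; exact ENNReal.one_ne_top
  -- support finsets
  set T : Finset α → Finset (Finset α) :=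
    fun B => Finset.univ.filter (fun Z => B ⊆ Z ∧ φ {Z} ≠ 0) with hT
  have hmemT : ∀ (B Z : Finset α), Z ∈ T B ↔ B ⊆ Z ∧ φ {Z} ≠ 0 := by
    intro B Z; simp [hT]
  have hsumT : ∀ B : Finset α, φ {Z : Finset α | B ⊆ Z} = ∑ Z ∈ T B, φ {Z} := by
    intro B
    rw [meas_eq_sum_singletons]
    rw [← Finset.sum_filter_of_ne (p := fun Z => φ {Z} ≠ 0) (fun Z _ hZ => hZ)]
    apply Finset.sum_congr _ fun _ _ => rfl
    ext Z
    simp [hT, Set.Finite.mem_toFinset]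
  have hsing : ∀ t : α, {Z : Finset α | ({t} : Finset α) ⊆ Z} = {Z : Finset α | t ∈ Z} := by
    intro t; ext Z; simp
  have hsumt : ∀ t : α, ∑ Z ∈ T {t}, φ {Z} = ENNReal.ofReal (x t) := by
    intro t
    rw [← hsumT, hsing, hmarg]
  -- totality of containment among atoms of the support
  have htot : ∀ s t : α, (∀ Z : Finset α, φ {Z} ≠ 0 → s ∈ Z → t ∈ Z) ∨
      (∀ Z : Finset α, φ {Z} ≠ 0 → t ∈ Z → s ∈ Z) := by
    intro s t
    by_contra h
    push_neg at h
    obtain ⟨⟨Z₁, hZ₁, hs₁, ht₁⟩, ⟨Z₂, hZ₂, ht₂, hs₂⟩⟩ := h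
    rcases hchain Z₁ Z₂ hZ₁ hZ₂ with h' | h'
    · exact hs₂ (h' hs₁)
    · exact ht₁ (h' ht₂)
  -- key upper-set identity
  have key : ∀ A : Finset α, φ {Z : Finset α | A ⊆ Z} = ψ {Z : Finset α | A ⊆ Z} := by
    intro A
    rcases A.eq_empty_or_nonempty with rfl | hA
    · have h1 : {Z : Finset α | ∅ ⊆ Z} = Set.univ := by
        ext Z; simp
      rw [h1, hψuniv, measure_univ]
    · set m := A.inf' hA x with hm
      have hm0 : 0 ≤ m := Finset.le_inf' hA x fun s _ => (hx s).1
      have hm1 : m ≤ 1 := by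
        obtain ⟨s, hs⟩ := hA
        exact le_trans (Finset.inf'_le x hs) (hx s).2
      have hψA : ψ {Z : Finset α | A ⊆ Z} = ENNReal.ofReal m := by
        rw [hψ_apply]
        have hset : f ⁻¹' {Z : Finset α | A ⊆ Z} ∩ Set.Icc 0 1 = Set.Icc 0 m := by
          ext lam
          simp only [Set.mem_inter_iff, Set.mem_preimage, Set.mem_setOf_eq, Set.mem_Icc,
            Finset.subset_iff, hmemf]
          constructor
          · rintro ⟨h1, h2, _⟩
            exact ⟨h2, (Finset.le_inf'_iff hA x).2 fun s hs => h1 hs⟩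
          · rintro ⟨h1, h2⟩
            have h3 := (Finset.le_inf'_iff hA x).1 h2
            exact ⟨fun {s} hs => h3 s hs, h1, le_trans h2 hm1⟩
        rw [hset, Real.volume_Icc]
        simp
      obtain ⟨s₀, hs₀A, hs₀min⟩ := A.exists_min_image x hA
      have hxmin : x s₀ = m :=
        le_antisymm (Finset.le_inf' hA x fun s hs => hs₀min s hs) (Finset.inf'_le x hs₀A)
      have hTA : T A = T {s₀} := by
        apply Finset.Subset.antisymm
        · intro Z hZ
          rw [hmemT] at hZ ⊢
          exact ⟨Finset.singleton_subset_iff.2 (hZ.1 hs₀A), hZ.2⟩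
        · intro Z hZ
          rw [hmemT] at hZ ⊢
          refine ⟨fun t ht => ?_, hZ.2⟩
          rcases htot s₀ t with hP | hP
          · exact hP Z hZ.2 (Finset.singleton_subset_iff.1 hZ.1)
          · -- T {t} ⊆ T {s₀}, and sums are equal, so T {t} = T {s₀}
            have hsub : T {t} ⊆ T {s₀} := by
              intro W hW
              rw [hmemT] at hW ⊢
              exact ⟨Finset.singleton_subset_iff.2
                (hP W hW.2 (Finset.singleton_subset_iff.1 hW.1)), hW.2⟩
            have hle : ENNReal.ofReal (x s₀) ≤ ENNReal.ofReal (x t) :=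
              ENNReal.ofReal_le_ofReal (hs₀min t ht)
            have hsdiff : ∑ W ∈ T {s₀} \ T {t}, φ {W} + ∑ W ∈ T {t}, φ {W}
                = ∑ W ∈ T {s₀}, φ {W} := Finset.sum_sdiff hsub
            have hzero : ∑ W ∈ T {s₀} \ T {t}, φ {W} = 0 := by
              have hle2 : ∑ W ∈ T {s₀} \ T {t}, φ {W} + ∑ W ∈ T {t}, φ {W}
                  ≤ 0 + ∑ W ∈ T {t}, φ {W} := by
                rw [hsdiff, hsumt, hsumt, zero_add]
                exact le_trans hle (le_of_eq rfl)
              have hne : ∑ W ∈ T {t}, φ {W} ≠ ⊤ := by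
                rw [hsumt]; exact ENNReal.ofReal_ne_top
              exact le_antisymm ((ENNReal.add_le_add_iff_right hne).1 hle2) zero_le
            by_contra htZ
            have hZnot : Z ∉ T {t} := by
              rw [hmemT]
              intro hcon
              exact htZ (Finset.singleton_subset_iff.1 hcon.1)
            have hZsd : Z ∈ T {s₀} \ T {t} := Finset.mem_sdiff.2 ⟨by rw [hmemT]; exact hZ, hZnot⟩
            exact hZ.2 (Finset.sum_eq_zero_iff.1 hzero Z hZsd)
      rw [hsumT, hTA, hsumt, hψA, hxmin]
  -- singleton values agree, by downward strong induction
  have hsingle : ∀ A : Finset α, φ {A} = ψ {A} := by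
    have H : ∀ n : ℕ, ∀ A : Finset α, (Finset.univ \ A).card ≤ n → φ {A} = ψ {A} := by
      intro n
      induction n with
      | zero =>
        intro A hA
        have hAuniv : A = Finset.univ := by
          have h0 : (Finset.univ \ A) = ∅ := Finset.card_eq_zero.1 (Nat.le_zero.1 hA)
          exact Finset.Subset.antisymm (Finset.subset_univ A)
            (Finset.sdiff_eq_empty_iff_subset.1 h0)
        subst hAuniv
        have h1 : {Z : Finset α | Finset.univ ⊆ Z} = {Finset.univ} := by
          ext Z
          simp [Finset.univ_subset_iff, eq_comm]
        have := key Finset.univ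
        rwa [h1] at this
      | succ n ih =>
        intro A hA
        have hup : {Z : Finset α | A ⊆ Z} = {A} ∪ {Z : Finset α | A ⊂ Z} := by
          ext Z
          simp only [Set.mem_setOf_eq, Set.mem_union, Set.mem_singleton_iff]
          constructor
          · intro h
            rcases eq_or_ne Z A with rfl | hne
            · exact Or.inl rfl
            · exact Or.inr (Finset.ssubset_iff_subset_ne.2 ⟨h, Ne.symm hne⟩)
          · rintro (rfl | h)
            · exact subset_rfl
            · exact h.subset
        have hdisj : Disjoint ({A} : Set (Finset α)) {Z : Finset α | A ⊂ Z} := by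
          rw [Set.disjoint_singleton_left]
          exact fun h => (Finset.ssubset_iff_subset_ne.1 h).2 rfl
        have hstrict : φ {Z : Finset α | A ⊂ Z} = ψ {Z : Finset α | A ⊂ Z} := by
          rw [meas_eq_sum_singletons φ, meas_eq_sum_singletons ψ]
          refine Finset.sum_congr rfl fun Z hZ => ?_
          rw [Set.Finite.mem_toFinset, Set.mem_setOf_eq] at hZ
          apply ih
          have h1 : Z.card ≤ Finset.univ.card := Finset.card_le_univ Z
          have h2 : A.card < Z.card := Finset.card_lt_card hZ
          rw [Finset.card_sdiff_of_subset (Finset.subset_univ _)] at hA ⊢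
          omega
        have h1 := key A
        rw [hup, measure_union hdisj (Set.toFinite _).measurableSet,
          measure_union hdisj (Set.toFinite _).measurableSet, hstrict] at h1
        have hfin : ψ {Z : Finset α | A ⊂ Z} ≠ ⊤ := hψfin _
        rw [add_comm (φ {A}), add_comm (ψ {A})] at h1
        exact (ENNReal.add_right_inj hfin).1 h1
    intro A
    exact H _ A le_rfl
  refine Measure.ext fun U _ => ?_
  rw [meas_eq_sum_singletons φ U, meas_eq_sum_singletons ψ U]
  exact Finset.sum_congr rfl fun Z _ => hsingle Z
end

section
/- For n = 2^d there exists a rendezvous code of length T = 4n and size d + 2: that is, a family R of d+2 sequences in {0, 1, ..., n}^T such that for every ordered pair of distinct sequences x, y ∈ R, there exists a set of n time steps on which x takes each value in {1, ..., n} exactly once while y takes the value 0 (its repeated label) at each of those steps, where 0 occurs at least n times in y. -/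
private def rvE (d : ℕ) : Fin (4 * 2 ^ d) ≃ (Fin (d + 2) → Fin 2) :=
  (finCongr (by rw [pow_succ, pow_succ]; ring : 4 * 2 ^ d = 2 ^ (d + 2))).trans
    finFunctionFinEquiv.symm

private def rvR (d : ℕ) (a : Fin (d + 2)) (t : Fin (4 * 2 ^ d)) : ℕ :=
  if rvE d t (a + 1 + Fin.last (d + 1)) = 0 then 0
  else 1 + (finFunctionFinEquiv (fun k : Fin d =>
      rvE d t (a + 1 + k.succ.castSucc) + rvE d t (a + 1 + (0 : Fin (d + 2)))) :
    Fin (2 ^ d)).val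

private def rvF (d : ℕ) (a : Fin (d + 2)) (m : Fin (d + 1)) (w : Fin (2 ^ d)) :
    Fin (d + 2) → Fin 2 :=
  fun c => Fin.lastCases 1
    (Fin.cases (Fin.cases 0 (finFunctionFinEquiv.symm w) m)
      (fun k => finFunctionFinEquiv.symm w k + Fin.cases 0 (finFunctionFinEquiv.symm w) m))
    (c - (a + 1))

private lemma rv_add_self : ∀ x : Fin 2, x + x = 0 := by decide

private lemma rvF_at (d : ℕ) (a : Fin (d + 2)) (m : Fin (d + 1)) (w : Fin (2 ^ d))
    (k : Fin (d + 2)) : rvF d a m w (a + 1 + k) =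
    Fin.lastCases 1
      (Fin.cases (Fin.cases 0 (finFunctionFinEquiv.symm w) m)
        (fun j => finFunctionFinEquiv.symm w j + Fin.cases 0 (finFunctionFinEquiv.symm w) m)) k := by
  unfold rvF
  rw [add_sub_cancel_left]

private lemma rvR_t0 (d : ℕ) (a : Fin (d + 2)) (m : Fin (d + 1)) (w : Fin (2 ^ d)) :
    rvR d a ((rvE d).symm (rvF d a m w)) = 1 + w.val := by
  have hE : ∀ c, rvE d ((rvE d).symm (rvF d a m w)) c = rvF d a m w c := by
    intro c; rw [Equiv.apply_symm_apply]
  unfold rvR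
  simp only [hE, rvF_at]
  rw [Fin.lastCases_last]
  have h1 : (1 : Fin 2) ≠ 0 := by decide
  rw [if_neg h1]
  congr 1
  have h0 : (0 : Fin (d + 2)) = Fin.castSucc 0 := rfl
  have hb : (fun k : Fin d =>
      (Fin.lastCases 1
        (Fin.cases (Fin.cases 0 (finFunctionFinEquiv.symm w) m)
          (fun j => finFunctionFinEquiv.symm w j + Fin.cases 0 (finFunctionFinEquiv.symm w) m))
        (k.succ.castSucc) : Fin 2) +
      Fin.lastCases 1
        (Fin.cases (Fin.cases 0 (finFunctionFinEquiv.symm w) m)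
          (fun j => finFunctionFinEquiv.symm w j + Fin.cases 0 (finFunctionFinEquiv.symm w) m))
        (0 : Fin (d + 2))) = finFunctionFinEquiv.symm w := by
    funext k
    rw [h0, Fin.lastCases_castSucc, Fin.lastCases_castSucc, Fin.cases_zero, Fin.cases_succ]
    rw [add_assoc, rv_add_self _, add_zero]
  rw [hb, Equiv.apply_symm_apply]

private lemma rv_add_last (d : ℕ) (a : Fin (d + 2)) : a + 1 + Fin.last (d + 1) = a := by
  rw [add_assoc, add_comm (1 : Fin (d + 2)), Fin.last_add_one, add_zero]

private lemma rvR_t0_zero (d : ℕ) (a b : Fin (d + 2)) (m : Fin (d + 1)) (w : Fin (2 ^ d))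
    (hb : b = a + 1 + m.castSucc) :
    rvR d b ((rvE d).symm (rvF d a m w)) = 0 := by
  have hE : ∀ c, rvE d ((rvE d).symm (rvF d a m w)) c = rvF d a m w c := by
    intro c; rw [Equiv.apply_symm_apply]
  unfold rvR
  rw [if_pos]
  rw [rv_add_last, hE, hb, rvF_at, Fin.lastCases_castSucc]
  induction m using Fin.cases with
  | zero => rw [Fin.cases_zero, Fin.cases_zero]
  | succ k => rw [Fin.cases_succ, Fin.cases_succ, rv_add_self]

/-- For `n = 2^d` there is a rendezvous code of length `T = 4n` and size `d + 2`:
a family `R` of `d+2` walk schedules over labels `{0,...,n}` such that for every ordered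
pair of distinct schedules `x = R a`, `y = R b`, the label `0` occurs at least `n` times
in `y`, and there is a set `S` of `n` steps on which `y` is always `0` while `x` takes
each label `1,...,n` exactly once. -/
theorem stmt_15 (d : ℕ) :
    ∃ R : Fin (d + 2) → Fin (4 * 2 ^ d) → ℕ,
      (∀ a t, R a t ≤ 2 ^ d) ∧
      ∀ a b : Fin (d + 2), a ≠ b →
        2 ^ d ≤ (Finset.univ.filter (fun t => R b t = 0)).card ∧
        ∃ S : Finset (Fin (4 * 2 ^ d)), S.card = 2 ^ d ∧
          (∀ t ∈ S, R b t = 0) ∧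
          (∀ v : ℕ, 1 ≤ v → v ≤ 2 ^ d → (S.filter (fun t => R a t = v)).card = 1) := by
  refine ⟨rvR d, ?_, ?_⟩
  · intro a t
    unfold rvR
    split
    · exact Nat.zero_le _
    · have := (finFunctionFinEquiv (fun k : Fin d =>
        rvE d t (a + 1 + k.succ.castSucc) + rvE d t (a + 1 + (0 : Fin (d + 2)))) :
        Fin (2 ^ d)).isLt
      omega
  · intro a b hab
    have hlast : b - (a + 1) ≠ Fin.last (d + 1) := by
      intro h
      apply hab
      have hb2 : b - (a + 1) + (a + 1) = b := sub_add_cancel b (a + 1)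
      rw [h] at hb2
      rw [add_comm (Fin.last (d + 1))] at hb2
      rw [rv_add_last] at hb2
      exact hb2.symm.symm ▸ rfl
    obtain ⟨m, hm⟩ := Fin.exists_castSucc_eq.mpr hlast
    have hb : b = a + 1 + m.castSucc := by
      rw [hm, add_comm (a + 1), sub_add_cancel]
    set t0 : Fin (2 ^ d) → Fin (4 * 2 ^ d) := fun w => (rvE d).symm (rvF d a m w) with ht0
    have hinj : Function.Injective t0 := by
      intro w w' h
      have h2 := congrArg (rvR d a) h
      rw [rvR_t0, rvR_t0] at h2
      exact Fin.ext (by omega)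
    have hzero : ∀ w, rvR d b (t0 w) = 0 := fun w => rvR_t0_zero d a b m w hb
    have hval : ∀ w, rvR d a (t0 w) = 1 + w.val := fun w => rvR_t0 d a m w
    refine ⟨?_, Finset.image t0 Finset.univ, ?_, ?_, ?_⟩
    · calc (2 : ℕ) ^ d = (Finset.image t0 Finset.univ).card := by
            rw [Finset.card_image_of_injective _ hinj, Finset.card_univ, Fintype.card_fin]
        _ ≤ _ := by
            apply Finset.card_le_card
            intro t ht
            obtain ⟨w, _, rfl⟩ := Finset.mem_image.mp ht
            exact Finset.mem_filter.mpr ⟨Finset.mem_univ _, hzero w⟩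
    · rw [Finset.card_image_of_injective _ hinj, Finset.card_univ, Fintype.card_fin]
    · intro t ht
      obtain ⟨w, _, rfl⟩ := Finset.mem_image.mp ht
      exact hzero w
    · intro v h1 h2
      have hset : (Finset.image t0 Finset.univ).filter (fun t => rvR d a t = v)
          = {t0 ⟨v - 1, by omega⟩} := by
        ext t
        simp only [Finset.mem_filter, Finset.mem_image, Finset.mem_singleton,
          Finset.mem_univ, true_and]
        constructor
        · rintro ⟨⟨w, rfl⟩, hv⟩
          rw [hval] at hv
          congr 1
          exact Fin.ext (by simp; omega)
        · rintro rfl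
          exact ⟨⟨_, rfl⟩, by rw [hval]; simp; omega⟩
      rw [hset, Finset.card_singleton]
end

section
/- For T ≤ n, the function θ ↦ θ² + 2θ(1-θ)(1 - T/n) + (1-θ)²·e^{-T/n} on [0,1] attains its minimum at θ* = (1 - (1 - T/n)e^{T/n}) / (1 - (1 - 2T/n)e^{T/n}), and the minimum value is (1 - (1 - T/n)²·e^{T/n}) / (1 - (1 - 2T/n)·e^{T/n}). -/
/-- For `T ≤ n`, the Anderson-Weber failure probability
`θ ↦ θ² + 2θ(1-θ)(1 - T/n) + (1-θ)²e^{-T/n}` on `[0,1]` attains its minimum at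
`θ* = (1 - (1 - T/n)e^{T/n})/(1 - (1 - 2T/n)e^{T/n})`, with minimum value
`(1 - (1 - T/n)²e^{T/n})/(1 - (1 - 2T/n)e^{T/n})`. -/
theorem stmt_17 (n T : ℝ) (hn : 0 < n) (hT : 0 < T) (hTn : T ≤ n)
    (F : ℝ → ℝ)
    (hF : ∀ θ : ℝ, F θ =
      θ ^ 2 + 2 * θ * (1 - θ) * (1 - T / n) + (1 - θ) ^ 2 * Real.exp (-(T / n)))
    (θs : ℝ)
    (hθs : θs = (1 - (1 - T / n) * Real.exp (T / n)) /
                (1 - (1 - 2 * T / n) * Real.exp (T / n))) :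
    θs ∈ Set.Icc (0 : ℝ) 1 ∧
    (∀ θ ∈ Set.Icc (0 : ℝ) 1, F θs ≤ F θ) ∧
    F θs = (1 - (1 - T / n) ^ 2 * Real.exp (T / n)) /
           (1 - (1 - 2 * T / n) * Real.exp (T / n)) := by
  set x : ℝ := T / n with hx_def
  have hx : 0 < x := div_pos hT hn
  rw [show (2:ℝ) * T / n = 2 * x by rw [hx_def]; ring] at hθs ⊢
  set y : ℝ := Real.exp x with hy_def
  have hy : 0 < y := Real.exp_pos x
  have hinv : Real.exp (-x) = y⁻¹ := Real.exp_neg x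
  -- key inequality : (1 - x) * y < 1
  have h1 : (1 - x) * y < 1 := by
    have h0 : -x + 1 < Real.exp (-x) := Real.add_one_lt_exp (by linarith : -x ≠ 0)
    rw [hinv] at h0
    have := mul_lt_mul_of_pos_right h0 hy
    calc (1 - x) * y = (-x + 1) * y := by ring
      _ < y⁻¹ * y := this
      _ = 1 := inv_mul_cancel₀ hy.ne'
  set N : ℝ := 1 - (1 - x) * y with hN_def
  set D : ℝ := 1 - (1 - 2 * x) * y with hD_def
  have hN : 0 < N := by simp only [hN_def]; linarith
  have hDN : D = N + x * y := by rw [hN_def, hD_def]; ring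
  have hxy : 0 < x * y := mul_pos hx hy
  have hD : 0 < D := by rw [hDN]; linarith
  have hθsND : θs = N / D := by rw [hθs]
  set M : ℝ := (1 - (1 - x) ^ 2 * y) / D with hM_def
  -- the fundamental identity
  have key : ∀ θ : ℝ, F θ = M + (D / y) * (θ - θs) ^ 2 := by
    intro θ
    rw [hF, hθsND, hM_def, hinv, hD_def, hN_def]
    have hD0 : 1 - y * (1 - 2 * x) ≠ 0 := by rw [mul_comm]; exact hD.ne'
    field_simp
    ring
  have hFθs : F θs = M := by
    rw [key θs]
    simp
  refine ⟨⟨?_, ?_⟩, ?_, ?_⟩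
  · rw [hθsND]; positivity
  · rw [hθsND, div_le_one hD, hDN]; linarith
  · intro θ _
    rw [hFθs, key θ]
    have : 0 ≤ (D / y) * (θ - θs) ^ 2 := by positivity
    linarith
  · rw [hFθs, hM_def]
end

section
/- Let n = 6m and let (v₀, v₁, ..., v_T) be a walk on the cycle ℤ/nℤ, meaning each v_{t+1} - v_t ∈ {-1, 0, 1} (mod n). Then the stroboscopic sequence (⌊v₀/m⌋, ⌊v_m/m⌋, ⌊v_{2m}/m⌋, ..., ⌊v_T/m⌋), with each vertex represented by its residue in {0,...,n-1}, is a walk on the cycle ℤ/6ℤ: consecutive terms differ by an element of {-1, 0, 1} modulo 6. -/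
lemma six_arith (sx sy j u : ℤ) (h1 : 0 ≤ sx) (h2 : sx < 6) (h3 : 0 ≤ sy) (h4 : sy < 6)
    (hu : u = sy - sx - 6 * j) (hu1 : -1 ≤ u) (hu2 : u ≤ 1) :
    sy + 1 = sx ∨ (sy = 5 ∧ sx = 0) ∨ sy = sx ∨ sy = sx + 1 ∨ (sy = 0 ∧ sx = 5) := by
  omega

lemma sector_step (m : ℕ) (hm : 0 < m) (x y : ZMod (6 * m)) (d : ℤ)
    (hd : d.natAbs ≤ m) (hxy : y = x + d) :
    ((y.val / m : ℕ) : ZMod 6) - ((x.val / m : ℕ) : ZMod 6)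
      ∈ ({-1, 0, 1} : Set (ZMod 6)) := by
  haveI : NeZero (6 * m) := ⟨by omega⟩
  have hcongr : ((y.val : ℤ) : ZMod (6 * m)) = ((x.val + d : ℤ) : ZMod (6 * m)) := by
    push_cast
    rw [ZMod.natCast_val, ZMod.natCast_val, ZMod.cast_id, ZMod.cast_id, hxy]
  rw [ZMod.intCast_eq_intCast_iff] at hcongr
  obtain ⟨j, hj⟩ := (hcongr.symm).dvd
  have hxlt : x.val < 6 * m := ZMod.val_lt x
  have hylt : y.val < 6 * m := ZMod.val_lt y
  have hx' : m * (x.val / m) + x.val % m = x.val := Nat.div_add_mod _ _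
  have hy' : m * (y.val / m) + y.val % m = y.val := Nat.div_add_mod _ _
  have hrx : x.val % m < m := Nat.mod_lt _ hm
  have hry : y.val % m < m := Nat.mod_lt _ hm
  have hsx6 : x.val / m < 6 := (Nat.div_lt_iff_lt_mul hm).mpr (by omega)
  have hsy6 : y.val / m < 6 := (Nat.div_lt_iff_lt_mul hm).mpr (by omega)
  have habs : -(m : ℤ) ≤ d ∧ d ≤ m := ⟨by omega, by omega⟩
  have hm' : (0 : ℤ) < m := by exact_mod_cast hm
  have hXx : (m : ℤ) * ((x.val / m : ℕ) : ℤ) + ((x.val % m : ℕ) : ℤ) = (x.val : ℤ) := by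
    exact_mod_cast hx'
  have hYy : (m : ℤ) * ((y.val / m : ℕ) : ℤ) + ((y.val % m : ℕ) : ℤ) = (y.val : ℤ) := by
    exact_mod_cast hy'
  have hj' : (y.val : ℤ) - ((x.val : ℤ) + d) = 6 * m * j := by push_cast at hj; linarith
  have hmain : (((y.val / m : ℕ) : ℤ) - ((x.val / m : ℕ) : ℤ) - 6 * j) * m
      = ((x.val % m : ℕ) : ℤ) - ((y.val % m : ℕ) : ℤ) + d := by
    linear_combination hYy - hXx + hj'
  have h1 : (0 : ℤ) ≤ ((x.val % m : ℕ) : ℤ) := by positivity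
  have h2 : (0 : ℤ) ≤ ((y.val % m : ℕ) : ℤ) := by positivity
  have h3 : ((x.val % m : ℕ) : ℤ) < m := by exact_mod_cast hrx
  have h4 : ((y.val % m : ℕ) : ℤ) < m := by exact_mod_cast hry
  have hub1 : -(2 * (m : ℤ)) < (((y.val / m : ℕ) : ℤ) - ((x.val / m : ℕ) : ℤ) - 6 * j) * m := by
    rw [hmain]; linarith [habs.1]
  have hub2 : (((y.val / m : ℕ) : ℤ) - ((x.val / m : ℕ) : ℤ) - 6 * j) * m < 2 * m := by
    rw [hmain]; linarith [habs.2]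
  have hu1 : -1 ≤ ((y.val / m : ℕ) : ℤ) - ((x.val / m : ℕ) : ℤ) - 6 * j := by nlinarith
  have hu2 : ((y.val / m : ℕ) : ℤ) - ((x.val / m : ℕ) : ℤ) - 6 * j ≤ 1 := by nlinarith
  have keyZ := six_arith ((x.val / m : ℕ) : ℤ) ((y.val / m : ℕ) : ℤ) j _
    (by positivity) (by exact_mod_cast hsx6) (by positivity) (by exact_mod_cast hsy6)
    rfl hu1 hu2
  rcases keyZ with h | ⟨ha, hb⟩ | h | h | ⟨ha, hb⟩
  · have h' : y.val / m + 1 = x.val / m := by exact_mod_cast h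
    have : ((y.val / m : ℕ) : ZMod 6) - ((x.val / m : ℕ) : ZMod 6) = -1 := by
      rw [← h']; push_cast; ring
    rw [this]; exact Set.mem_insert _ _
  · have ha' : y.val / m = 5 := by exact_mod_cast ha
    have hb' : x.val / m = 0 := by exact_mod_cast hb
    have : ((y.val / m : ℕ) : ZMod 6) - ((x.val / m : ℕ) : ZMod 6) = -1 := by
      rw [ha', hb']; decide
    rw [this]; exact Set.mem_insert _ _
  · have h' : y.val / m = x.val / m := by exact_mod_cast h
    rw [h', sub_self]
    exact Set.mem_insert_of_mem _ (Set.mem_insert _ _)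
  · have h' : y.val / m = x.val / m + 1 := by exact_mod_cast h
    have : ((y.val / m : ℕ) : ZMod 6) - ((x.val / m : ℕ) : ZMod 6) = 1 := by
      rw [h']; push_cast; ring
    rw [this]; exact Set.mem_insert_of_mem _ (Set.mem_insert_of_mem _ rfl)
  · have ha' : y.val / m = 0 := by exact_mod_cast ha
    have hb' : x.val / m = 5 := by exact_mod_cast hb
    have : ((y.val / m : ℕ) : ZMod 6) - ((x.val / m : ℕ) : ZMod 6) = 1 := by
      rw [ha', hb']; decide
    rw [this]; exact Set.mem_insert_of_mem _ (Set.mem_insert_of_mem _ rfl)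

/-- Dividing the `n`-cycle (`n = 6m`) into six sectors of size `m` and observing a walk
stroboscopically every `m` steps yields a walk on the `6`-cycle: consecutive sector
indices differ by `-1`, `0`, or `1` mod 6. -/
theorem stmt_19 (m L : ℕ) (hm : 0 < m) (v : ℕ → ZMod (6 * m))
    (hwalk : ∀ t < L * m, v (t + 1) - v t ∈ ({-1, 0, 1} : Set (ZMod (6 * m)))) :
    ∀ k < L,
      ((((v ((k + 1) * m)).val / m : ℕ) : ZMod 6) - (((v (k * m)).val / m : ℕ) : ZMod 6))
        ∈ ({-1, 0, 1} : Set (ZMod 6)) := by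
  intro k hk
  have drift : ∀ t ≤ m, ∃ d : ℤ, d.natAbs ≤ t ∧ v (k * m + t) = v (k * m) + d := by
    intro t ht
    induction t with
    | zero => exact ⟨0, by simp⟩
    | succ t ih =>
      obtain ⟨d, hd, hvd⟩ := ih (by omega)
      have hlt : k * m + t < L * m := by
        have : (k + 1) * m ≤ L * m := Nat.mul_le_mul_right m (by omega)
        nlinarith
      have hstep := hwalk (k * m + t) hlt
      simp only [Set.mem_insert_iff, Set.mem_singleton_iff] at hstep
      rcases hstep with h | h | h
      · refine ⟨d - 1, by omega, ?_⟩
        show v (k * m + t + 1) = v (k * m) + ((d - 1 : ℤ) : ZMod (6 * m))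
        have h2 : v (k * m + t + 1) = v (k * m + t) + (-1) := by rw [← h]; ring
        rw [h2, hvd]; push_cast; ring
      · refine ⟨d, by omega, ?_⟩
        show v (k * m + t + 1) = v (k * m) + (d : ZMod (6 * m))
        have h2 : v (k * m + t + 1) = v (k * m + t) := sub_eq_zero.mp h
        rw [h2, hvd]
      · refine ⟨d + 1, by omega, ?_⟩
        show v (k * m + t + 1) = v (k * m) + ((d + 1 : ℤ) : ZMod (6 * m))
        have h2 : v (k * m + t + 1) = v (k * m + t) + 1 := by rw [← h]; ring
        rw [h2, hvd]; push_cast; ring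
  obtain ⟨d, hd, hvd⟩ := drift m le_rfl
  have he : (k + 1) * m = k * m + m := by ring
  rw [he]
  exact sector_step m hm (v (k * m)) (v (k * m + m)) d hd hvd
end
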